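/- For every natural number n, ∫_0^{π/2} (cos x)^n · cos(n x) dx = π / 2^{n+1}. -/

import Mathlib

open Real intervalIntegral

lemma aux_deriv (n : ℕ) (x : ℝ) :
    HasDerivAt (fun y => Real.cos y ^ (n+1) * Real.sin (((n:ℝ)+1) * y) / ((n:ℝ)+1))
      (Real.cos x ^ n * Real.cos (((n:ℝ)+2) * x)) x := by
  have h1 : HasDerivAt (fun y => Real.cos y ^ (n+1))
      (((n:ℝ)+1) * Real.cos x ^ n * (-Real.sin x)) x := by
    simpa [Nat.cast_add] using (Real.hasDerivAt_cos x).fun_pow (n+1)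
  have h2 : HasDerivAt (fun y => Real.sin (((n:ℝ)+1) * y))
      (Real.cos (((n:ℝ)+1) * x) * ((n:ℝ)+1)) x := by
    simpa [Function.comp_def] using (Real.hasDerivAt_sin (((n:ℝ)+1)*x)).comp x
      ((hasDerivAt_id x).const_mul ((n:ℝ)+1))
  have h := (h1.fun_mul h2).div_const ((n:ℝ)+1)
  refine h.congr_deriv ?_
  have hne : ((n:ℝ)+1) ≠ 0 := by positivity
  have hcos : Real.cos (((n:ℝ)+2) * x) = Real.cos (((n:ℝ)+1) * x + x) := by ring_nf
  rw [hcos, Real.cos_add]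
  field_simp
  ring

lemma aux_zero (n : ℕ) :
    ∫ x in (0:ℝ)..(π/2), Real.cos x ^ n * Real.cos (((n:ℝ)+2) * x) = 0 := by
  have := intervalIntegral.integral_eq_sub_of_hasDerivAt
    (a := (0:ℝ)) (b := π/2)
    (f := fun y => Real.cos y ^ (n+1) * Real.sin (((n:ℝ)+1) * y) / ((n:ℝ)+1))
    (fun x _ => aux_deriv n x)
    (by
      apply Continuous.intervalIntegrable
      continuity)
  rw [this]
  simp [Real.cos_pi_div_two]

open Real in
theorem statement_5 (n : ℕ) :
    ∫ x in (0 : ℝ)..(π / 2), (Real.cos x) ^ n * Real.cos (n * x) = π / 2 ^ (n + 1) := by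
  induction n with
  | zero => simp
  | succ n ih =>
    have key : ∀ x : ℝ, Real.cos x ^ (n+1) * Real.cos (((n:ℝ)+1) * x)
        = (Real.cos x ^ n * Real.cos ((n:ℝ) * x)
           + Real.cos x ^ n * Real.cos (((n:ℝ)+2) * x)) / 2 := by
      intro x
      have e1 : (n:ℝ) * x = ((n:ℝ)+1) * x - x := by ring
      have e2 : ((n:ℝ)+2) * x = ((n:ℝ)+1) * x + x := by ring
      rw [e1, e2, Real.cos_add, Real.cos_sub]
      ring
    have h1 : IntervalIntegrable (fun x => Real.cos x ^ n * Real.cos ((n:ℝ) * x))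
        MeasureTheory.volume 0 (π/2) := by
      apply Continuous.intervalIntegrable; continuity
    have h2 : IntervalIntegrable (fun x => Real.cos x ^ n * Real.cos (((n:ℝ)+2) * x))
        MeasureTheory.volume 0 (π/2) := by
      apply Continuous.intervalIntegrable; continuity
    have : (∫ x in (0:ℝ)..(π/2), Real.cos x ^ (n+1) * Real.cos (((n:ℝ)+1) * x))
        = (∫ x in (0:ℝ)..(π/2), (Real.cos x ^ n * Real.cos ((n:ℝ) * x)
           + Real.cos x ^ n * Real.cos (((n:ℝ)+2) * x)) / 2) := by
      apply intervalIntegral.integral_congr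
      intro x _
      exact key x
    rw [show ((n+1 : ℕ) : ℝ) = (n:ℝ)+1 by push_cast; ring, this]
    rw [intervalIntegral.integral_div, intervalIntegral.integral_add h1 h2, ih, aux_zero]
    rw [pow_succ]
    ring
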